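/- Let m ≥ 2 be an integer and suppose I₁, …, I_m are nonnegative real numbers satisfying, for each 2 ≤ ℓ ≤ m-1 and every ε > 0, the inequality I_ℓ ≤ ε I_ℓ + ε I_{ℓ-1} + C(ε, ℓ, m)(I₁ + I_{ℓ+1}) for some constants C(ε, ℓ, m) > 0. Then there exists a constant C depending only on m (and the constants C(ε,ℓ,m) for a suitable fixed choice of ε) such that I_ℓ ≤ C (I₁ + I_m) for all 1 ≤ ℓ ≤ m. -/

import Mathlib

/-- Auxiliary recursively defined constants: `(stmt12ab Cc k).1 * I 1 + (stmt12ab Cc k).2 * I (k+2)`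
will bound `I (k+1)`. -/
noncomputable def stmt12ab (Cc : ℝ → ℕ → ℝ) : ℕ → ℝ × ℝ
  | 0 => (1, 0)
  | n + 1 =>
    let p := stmt12ab Cc n
    let ε := 1 / (2 * (1 + p.2))
    let M := max (Cc ε (n + 2)) 1
    (2 * (ε * p.1 + M), 2 * M)

lemma stmt12ab_pos (Cc : ℝ → ℕ → ℝ) (n : ℕ) :
    0 < (stmt12ab Cc n).1 ∧ 0 ≤ (stmt12ab Cc n).2 := by
  induction n with
  | zero => simp [stmt12ab]
  | succ n ih =>
    obtain ⟨ha, hb⟩ := ih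
    have hε : 0 < 1 / (2 * (1 + (stmt12ab Cc n).2)) := by positivity
    have hM : (1:ℝ) ≤ max (Cc (1 / (2 * (1 + (stmt12ab Cc n).2))) (n + 2)) 1 :=
      le_max_right _ _
    constructor
    · show 0 < 2 * (1 / (2 * (1 + (stmt12ab Cc n).2)) * (stmt12ab Cc n).1 +
        max (Cc (1 / (2 * (1 + (stmt12ab Cc n).2))) (n + 2)) 1)
      nlinarith [mul_pos hε ha]
    · show 0 ≤ 2 * max (Cc (1 / (2 * (1 + (stmt12ab Cc n).2))) (n + 2)) 1
      linarith

/-- Auxiliary constants for the downward iteration: `I (m - j) ≤ stmt12D Cc m j * (I 1 + I m)`. -/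
noncomputable def stmt12D (Cc : ℝ → ℕ → ℝ) (m : ℕ) : ℕ → ℝ
  | 0 => 1
  | j + 1 => (stmt12ab Cc (m - j - 2)).1 + (stmt12ab Cc (m - j - 2)).2 * stmt12D Cc m j

lemma stmt12D_nonneg (Cc : ℝ → ℕ → ℝ) (m : ℕ) (j : ℕ) : 0 ≤ stmt12D Cc m j := by
  induction j with
  | zero => norm_num [stmt12D]
  | succ j ih =>
    obtain ⟨ha, hb⟩ := stmt12ab_pos Cc (m - j - 2)
    show 0 ≤ (stmt12ab Cc (m - j - 2)).1 + (stmt12ab Cc (m - j - 2)).2 * stmt12D Cc m j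
    nlinarith

/-- Iteration/absorption lemma: if nonnegative quantities `I₁, …, I_m` satisfy, for every
`2 ≤ ℓ ≤ m-1` and every `ε > 0`, `I_ℓ ≤ ε I_ℓ + ε I_{ℓ-1} + C(ε,ℓ)(I₁ + I_{ℓ+1})` with
constants `C(ε,ℓ) > 0`, then `I_ℓ ≤ C (I₁ + I_m)` for all `1 ≤ ℓ ≤ m`, with `C` depending
only on `m` and the constants `C(ε,ℓ)`. -/
theorem stmt_12 (m : ℕ) (hm : 2 ≤ m) (Cc : ℝ → ℕ → ℝ)
    (hCc : ∀ ε : ℝ, 0 < ε → ∀ ℓ : ℕ, 2 ≤ ℓ → ℓ ≤ m - 1 → 0 < Cc ε ℓ) :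
    ∃ C : ℝ, 0 < C ∧
      ∀ I : ℕ → ℝ, (∀ ℓ ≤ m, 0 ≤ I ℓ) →
        (∀ ε : ℝ, 0 < ε → ∀ ℓ : ℕ, 2 ≤ ℓ → ℓ ≤ m - 1 →
          I ℓ ≤ ε * I ℓ + ε * I (ℓ - 1) + Cc ε ℓ * (I 1 + I (ℓ + 1))) →
        ∀ ℓ : ℕ, 1 ≤ ℓ → ℓ ≤ m → I ℓ ≤ C * (I 1 + I m) := by
  refine ⟨1 + ∑ j ∈ Finset.range m, stmt12D Cc m j, ?_, ?_⟩
  · have : 0 ≤ ∑ j ∈ Finset.range m, stmt12D Cc m j :=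
      Finset.sum_nonneg fun j _ => stmt12D_nonneg Cc m j
    linarith
  intro I hI hrec ℓ hℓ1 hℓm
  have hI1 : 0 ≤ I 1 := hI 1 (by omega)
  have hIm : 0 ≤ I m := hI m le_rfl
  -- forward claim
  have key : ∀ k : ℕ, k + 2 ≤ m →
      I (k + 1) ≤ (stmt12ab Cc k).1 * I 1 + (stmt12ab Cc k).2 * I (k + 2) := by
    intro k
    induction k with
    | zero => intro _; simp [stmt12ab]
    | succ k ih =>
      intro hk3
      have ihk := ih (by omega)
      set a := (stmt12ab Cc k).1 with ha_def
      set b := (stmt12ab Cc k).2 with hb_def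
      obtain ⟨hapos, hbnn⟩ := stmt12ab_pos Cc k
      set ε := 1 / (2 * (1 + b)) with hε_def
      have hεpos : 0 < ε := by positivity
      set M := max (Cc ε (k + 2)) 1 with hM_def
      have hM1 : (1:ℝ) ≤ M := le_max_right _ _
      have hCcleM : Cc ε (k + 2) ≤ M := le_max_left _ _
      have hab : stmt12ab Cc (k + 1) = (2 * (ε * a + M), 2 * M) := rfl
      have hεb : ε * (1 + b) = 1 / 2 := by
        rw [hε_def]
        have hb1 : (1:ℝ) + b ≠ 0 := (by linarith : (0:ℝ) < 1 + b).ne'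
        field_simp
      have h1 := hrec ε hεpos (k + 2) (by omega) (by omega)
      have e1 : k + 2 - 1 = k + 1 := by omega
      rw [e1] at h1
      have hInext : 0 ≤ I (k + 2 + 1) := hI _ (by omega)
      have hstep : Cc ε (k + 2) * (I 1 + I (k + 2 + 1)) ≤ M * (I 1 + I (k + 2 + 1)) :=
        mul_le_mul_of_nonneg_right hCcleM (by linarith)
      have h3 : ε * I (k + 1) ≤ ε * (a * I 1 + b * I (k + 2)) :=
        mul_le_mul_of_nonneg_left ihk hεpos.le
      have h4 : ε * (1 + b) * I (k + 2) = 1 / 2 * I (k + 2) := by rw [hεb]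
      rw [hab]
      show I (k + 1 + 1) ≤ 2 * (ε * a + M) * I 1 + 2 * M * I (k + 1 + 2)
      have e2 : k + 1 + 1 = k + 2 := by omega
      have e3 : k + 1 + 2 = k + 2 + 1 := by omega
      rw [e2, e3]
      nlinarith [h1, h3, hstep, h4]
  -- downward claim
  have dn : ∀ j : ℕ, j ≤ m - 1 → I (m - j) ≤ stmt12D Cc m j * (I 1 + I m) := by
    intro j
    induction j with
    | zero =>
      intro _
      show I (m - 0) ≤ 1 * (I 1 + I m)
      simp only [Nat.sub_zero]
      linarith
    | succ j ih =>
      intro hj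
      have ihj := ih (by omega)
      obtain ⟨hapos, hbnn⟩ := stmt12ab_pos Cc (m - j - 2)
      have hDnn := stmt12D_nonneg Cc m j
      have hk := key (m - j - 2) (by omega)
      have e1 : m - j - 2 + 1 = m - (j + 1) := by omega
      have e2 : m - j - 2 + 2 = m - j := by omega
      rw [e1, e2] at hk
      show I (m - (j + 1)) ≤
        ((stmt12ab Cc (m - j - 2)).1 + (stmt12ab Cc (m - j - 2)).2 * stmt12D Cc m j) *
          (I 1 + I m)
      nlinarith [mul_le_mul_of_nonneg_left ihj hbnn, mul_nonneg hapos.le hIm]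
  -- conclude
  have hj : m - ℓ ≤ m - 1 := by omega
  have e : m - (m - ℓ) = ℓ := by omega
  have hd := dn (m - ℓ) hj
  rw [e] at hd
  have hDle : stmt12D Cc m (m - ℓ) ≤ 1 + ∑ j ∈ Finset.range m, stmt12D Cc m j := by
    have hmem : m - ℓ ∈ Finset.range m := Finset.mem_range.mpr (by omega)
    have := Finset.single_le_sum (f := fun j => stmt12D Cc m j)
      (fun j _ => stmt12D_nonneg Cc m j) hmem
    linarith
  calc I ℓ ≤ stmt12D Cc m (m - ℓ) * (I 1 + I m) := hd
    _ ≤ (1 + ∑ j ∈ Finset.range m, stmt12D Cc m j) * (I 1 + I m) :=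
        mul_le_mul_of_nonneg_right hDle (by linarith)
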